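/- arXiv:1005.1384 — 3 statements merged into one kernel-verified Lean document; each statement's English description precedes it below -/
import Mathlib

section
/- Define m : ℕ → ℕ on the digits by m 2 = 5, m 5 = 2, and m d = d for d ∈ {0,1,8}, and define mir : ℕ → ℕ on two-digit numbers by mir n = 10 * m (n % 10) + m (n / 10). Then the 5×5 matrix W given by W i j = mir (M5 i (4 - j)), where M5 has rows (0,11,22,88,55), (82,58,5,10,21), (15,20,81,52,8), (51,2,18,25,80), (28,85,50,1,12), is a magic square with magic constant 176: every row, every column, and both main diagonals of W sum to 176. -/
def M5 : Fin 5 → Fin 5 → ℕ :=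
  ![![0, 11, 22, 88, 55],
    ![82, 58, 5, 10, 21],
    ![15, 20, 81, 52, 8],
    ![51, 2, 18, 25, 80],
    ![28, 85, 50, 1, 12]]

def m : ℕ → ℕ
  | 2 => 5
  | 5 => 2
  | d => d

def mir (n : ℕ) : ℕ := 10 * m (n % 10) + m (n / 10)

def W : Fin 5 → Fin 5 → ℕ := fun i j => mir (M5 i (4 - j))

theorem W_magic :
    (∀ i : Fin 5, ∑ j, W i j = 176) ∧
    (∀ j : Fin 5, ∑ i, W i j = 176) ∧
    (∑ i, W i i = 176) ∧
    (∑ i : Fin 5, W i (4 - i) = 176) := by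
  refine ⟨fun i => ?_, fun j => ?_, ?_, ?_⟩ <;>
    first
      | (fin_cases i <;> decide)
      | (fin_cases j <;> decide)
      | decide
end

section
/- Define rev : ℕ → ℕ on two-digit numbers by rev n = 10 * (n % 10) + n / 10. Then the 4×4 matrix N given by N i j = rev (M4 i j), where M4 has rows (52,11,85,28), (88,25,51,12), (21,82,18,55), (15,58,22,81), is a magic square with magic constant 176: every row, every column, and both main diagonals of N sum to 176. -/
def M4 : Fin 4 → Fin 4 → ℕ :=
  ![![52, 11, 85, 28],
    ![88, 25, 51, 12],
    ![21, 82, 18, 55],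
    ![15, 58, 22, 81]]

def rev (n : ℕ) : ℕ := 10 * (n % 10) + n / 10

def N : Fin 4 → Fin 4 → ℕ := fun i j => rev (M4 i j)

theorem N_magic :
    (∀ i : Fin 4, ∑ j, N i j = 176) ∧
    (∀ j : Fin 4, ∑ i, N i j = 176) ∧
    (∑ i, N i i = 176) ∧
    (∑ i : Fin 4, N i (3 - i) = 176) := by
  refine ⟨?_, ?_, ?_, ?_⟩ <;> first
    | (intro i; fin_cases i <;> simp [N, M4, rev, Fin.sum_univ_four])
    | simp [N, M4, rev, Fin.sum_univ_four]
end

section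
/- Define rev : ℕ → ℕ on two-digit numbers by rev n = 10 * (n % 10) + n / 10. Then the 4×4 matrix R given by R i j = rev (M4 (3 - i) (3 - j)), where M4 has rows (52,11,85,28), (88,25,51,12), (21,82,18,55), (15,58,22,81), is a magic square with magic constant 176: every row, every column, and both main diagonals of R sum to 176. -/
def R : Fin 4 → Fin 4 → ℕ := fun i j => rev (M4 (3 - i) (3 - j))

theorem R_magic :
    (∀ i : Fin 4, ∑ j, R i j = 176) ∧
    (∀ j : Fin 4, ∑ i, R i j = 176) ∧
    (∑ i, R i i = 176) ∧
    (∑ i : Fin 4, R i (3 - i) = 176) := by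
  refine ⟨?_, ?_, ?_, ?_⟩ <;> first
  | (intro i; fin_cases i <;> decide)
  | decide
end
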